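/- arXiv:1104.0581 — 5 statements merged into one kernel-verified Lean document; each statement's English description precedes it below -/
import Mathlib

section
/- If X is uniformly distributed on [0,1], then the cdf of f_4(X) is y ↦ 1 − √(1−y) for y ∈ [0,1]; that is, f_4(X) is Kumaraswamy-distributed with parameters α = 1, β = 1/2. -/
open MeasureTheory

theorem logistic4_uniform_cdf (y : ℝ) (hy : y ∈ Set.Icc (0:ℝ) 1) :
    ((volume.restrict (Set.Icc (0:ℝ) 1)) {x | 4 * x * (1 - x) ≤ y}).toReal =
      1 - Real.sqrt (1 - y) := by
  obtain ⟨hy0, hy1⟩ := hy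
  set s := Real.sqrt (1 - y) with hsdef
  have hs0 : 0 ≤ s := Real.sqrt_nonneg _
  have hs2 : s ^ 2 = 1 - y := Real.sq_sqrt (by linarith)
  have hs1 : s ≤ 1 := by nlinarith
  have hmeas : MeasurableSet {x : ℝ | 4 * x * (1 - x) ≤ y} := by
    apply measurableSet_le (by fun_prop) measurable_const
  rw [Measure.restrict_apply hmeas]
  have hmeq : {x : ℝ | 4 * x * (1 - x) ≤ y} ∩ Set.Icc 0 1 =
      Set.Icc 0 ((1 - s) / 2) ∪ Set.Icc ((1 + s) / 2) 1 := by
    ext x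
    simp only [Set.mem_inter_iff, Set.mem_setOf_eq, Set.mem_Icc, Set.mem_union]
    constructor
    · rintro ⟨h, hx0, hx1⟩
      rcases le_or_gt x (1 / 2) with hx | hx
      · exact Or.inl ⟨hx0, by nlinarith [sq_nonneg (1 - 2*x - s), sq_nonneg (1 - 2*x + s)]⟩
      · exact Or.inr ⟨by nlinarith [sq_nonneg (2*x - 1 - s), sq_nonneg (2*x - 1 + s)], hx1⟩
    · rintro (⟨h0, h1⟩ | ⟨h0, h1⟩) <;> refine ⟨by nlinarith, by nlinarith, by nlinarith⟩
  rw [hmeq]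
  have hdisj : AEDisjoint volume (Set.Icc (0:ℝ) ((1 - s) / 2)) (Set.Icc ((1 + s) / 2) 1) := by
    unfold AEDisjoint
    rw [Set.Icc_inter_Icc, Real.volume_Icc, ENNReal.ofReal_eq_zero]
    have h1 : min ((1 - s) / 2) 1 ≤ (1 - s) / 2 := min_le_left _ _
    have h2 : (1 + s) / 2 ≤ max 0 ((1 + s) / 2) := le_max_right _ _
    linarith
  rw [measure_union₀ measurableSet_Icc.nullMeasurableSet hdisj,
    Real.volume_Icc, Real.volume_Icc,
    ENNReal.toReal_add ENNReal.ofReal_ne_top ENNReal.ofReal_ne_top,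
    ENNReal.toReal_ofReal (by linarith), ENNReal.toReal_ofReal (by linarith)]
  ring
end

section
/- If X is uniformly distributed on [0,1], then the cdf of f_4(f_4(X)) is y ↦ 1 − √(1 − √y) for y ∈ [0,1]; that is, f_4²(X) is Kumaraswamy-distributed with parameters α = β = 1/2. -/
open MeasureTheory

set_option maxHeartbeats 1600000 in
theorem logistic4_sq_uniform_cdf (y : ℝ) (hy : y ∈ Set.Icc (0:ℝ) 1) :
    ((volume.restrict (Set.Icc (0:ℝ) 1))
        {x | 4 * (4 * x * (1 - x)) * (1 - 4 * x * (1 - x)) ≤ y}).toReal =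
      1 - Real.sqrt (1 - Real.sqrt y) := by
  obtain ⟨hy0, hy1⟩ := hy
  set s := Real.sqrt (1 - y) with hs
  have hs0 : 0 ≤ s := Real.sqrt_nonneg _
  have hs2 : s ^ 2 = 1 - y := Real.sq_sqrt (by linarith)
  have hs1 : s ≤ 1 := by nlinarith
  set u := Real.sqrt ((1 + s) / 2) with hu
  set v := Real.sqrt ((1 - s) / 2) with hv
  have hu0 : 0 ≤ u := Real.sqrt_nonneg _
  have hv0 : 0 ≤ v := Real.sqrt_nonneg _
  have hu2 : u ^ 2 = (1 + s) / 2 := Real.sq_sqrt (by linarith)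
  have hv2 : v ^ 2 = (1 - s) / 2 := Real.sq_sqrt (by linarith)
  have hu1 : u ≤ 1 := by nlinarith
  have hvu : v ≤ u := by nlinarith
  have huv : u * v = Real.sqrt y / 2 := by
    rw [hu, hv, ← Real.sqrt_mul (by linarith)]
    rw [show (1+s)/2 * ((1-s)/2) = (1 - s^2) * (1/4) by ring, hs2]
    rw [show (1 - (1-y)) = y by ring, Real.sqrt_mul hy0,
      show (1/4 : ℝ) = (1/2)^2 by norm_num, Real.sqrt_sq (by norm_num)]
    ring
  have huvd : u - v = Real.sqrt (1 - Real.sqrt y) := by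
    have h : (u - v) ^ 2 = 1 - Real.sqrt y := by
      linear_combination hu2 + hv2 - 2 * huv
    rw [← h, Real.sqrt_sq (by linarith)]
  have hset : {x : ℝ | 4 * (4 * x * (1 - x)) * (1 - 4 * x * (1 - x)) ≤ y}ᶜ
      ∩ Set.Icc (0:ℝ) 1
      = Set.Ioo ((1-u)/2) ((1-v)/2) ∪ Set.Ioo ((1+v)/2) ((1+u)/2) := by
    ext x
    simp only [Set.mem_inter_iff, Set.mem_compl_iff, Set.mem_setOf_eq,
      Set.mem_Icc, Set.mem_union, Set.mem_Ioo, not_le]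
    constructor
    · rintro ⟨hgt, hx0, hx1⟩
      have h1 : (1 - 2*x)^2 < u^2 := by nlinarith [sq_nonneg (2*(1-2*x)^2 - 1 + s)]
      have h2 : v^2 < (1 - 2*x)^2 := by nlinarith [sq_nonneg (2*(1-2*x)^2 - 1 - s)]
      rcases le_or_gt x (1/2) with hx | hx
      · left
        constructor
        · have := lt_of_pow_lt_pow_left₀ 2 hu0 h1
          linarith
        · have := lt_of_pow_lt_pow_left₀ 2 (show (0:ℝ) ≤ 1 - 2*x by linarith) h2
          linarith
      · right
        constructor
        · have := lt_of_pow_lt_pow_left₀ 2 (show (0:ℝ) ≤ 2*x - 1 by linarith)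
            (show v^2 < (2*x-1)^2 by nlinarith)
          linarith
        · have := lt_of_pow_lt_pow_left₀ 2 hu0 (show (2*x-1)^2 < u^2 by nlinarith)
          linarith
    · rintro (⟨h1, h2⟩ | ⟨h1, h2⟩)
      · have hw1 : v < 1 - 2*x := by linarith
        have hw2 : 1 - 2*x < u := by linarith
        have hq1 : (1-2*x)^2 < u^2 := by
          nlinarith [mul_pos (show (0:ℝ) < u - (1-2*x) by linarith)
            (show (0:ℝ) < u + (1-2*x) by linarith)]
        have hq2 : v^2 < (1-2*x)^2 := by
          nlinarith [mul_pos (show (0:ℝ) < (1-2*x) - v by linarith)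
            (show (0:ℝ) < (1-2*x) + v by linarith)]
        have hp : 0 < (s - (2*(1-2*x)^2 - 1)) * (s + (2*(1-2*x)^2 - 1)) :=
          mul_pos (by linarith) (by linarith)
        refine ⟨by nlinarith [hp], by linarith, by linarith⟩
      · have hw1 : v < 2*x - 1 := by linarith
        have hw2 : 2*x - 1 < u := by linarith
        have hq1 : (1-2*x)^2 < u^2 := by
          nlinarith [mul_pos (show (0:ℝ) < u - (2*x-1) by linarith)
            (show (0:ℝ) < u + (2*x-1) by linarith)]
        have hq2 : v^2 < (1-2*x)^2 := by
          nlinarith [mul_pos (show (0:ℝ) < (2*x-1) - v by linarith)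
            (show (0:ℝ) < (2*x-1) + v by linarith)]
        have hp : 0 < (s - (2*(1-2*x)^2 - 1)) * (s + (2*(1-2*x)^2 - 1)) :=
          mul_pos (by linarith) (by linarith)
        refine ⟨by nlinarith [hp], by linarith, by linarith⟩
  have hcont : Continuous fun x : ℝ => 4 * (4 * x * (1 - x)) * (1 - 4 * x * (1 - x)) := by
    continuity
  have hS : MeasurableSet {x : ℝ | 4 * (4 * x * (1 - x)) * (1 - 4 * x * (1 - x)) ≤ y} :=
    measurableSet_le hcont.measurable measurable_const
  rw [Measure.restrict_apply hS]
  have hdisj : Disjoint (Set.Ioo ((1-u)/2) ((1-v)/2)) (Set.Ioo ((1+v)/2) ((1+u)/2)) := by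
    apply Set.disjoint_left.2
    rintro x ⟨_, hb⟩ ⟨hc, _⟩
    linarith
  have hcompl : volume ({x : ℝ | 4 * (4 * x * (1 - x)) * (1 - 4 * x * (1 - x)) ≤ y}ᶜ
      ∩ Set.Icc (0:ℝ) 1) = ENNReal.ofReal (u - v) := by
    rw [hset, measure_union hdisj measurableSet_Ioo, Real.volume_Ioo, Real.volume_Ioo,
      ← ENNReal.ofReal_add (by linarith) (by linarith)]
    congr 1
    ring
  have hsplit : volume ({x : ℝ | 4 * (4 * x * (1 - x)) * (1 - 4 * x * (1 - x)) ≤ y}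
      ∩ Set.Icc (0:ℝ) 1)
      + ENNReal.ofReal (u - v) = 1 := by
    rw [← hcompl]
    have : ({x : ℝ | 4 * (4 * x * (1 - x)) * (1 - 4 * x * (1 - x)) ≤ y}ᶜ
        ∩ Set.Icc (0:ℝ) 1) = Set.Icc (0:ℝ) 1 \
        ({x : ℝ | 4 * (4 * x * (1 - x)) * (1 - 4 * x * (1 - x)) ≤ y} ∩ Set.Icc (0:ℝ) 1) := by
      ext x
      simp only [Set.mem_inter_iff, Set.mem_compl_iff, Set.mem_diff, Set.mem_setOf_eq]
      tauto
    rw [this, measure_add_diff (hS.inter measurableSet_Icc).nullMeasurableSet (Set.Icc 0 1),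
      Set.union_eq_self_of_subset_left Set.inter_subset_right, Real.volume_Icc]
    norm_num
  have hfin : volume ({x : ℝ | 4 * (4 * x * (1 - x)) * (1 - 4 * x * (1 - x)) ≤ y}
      ∩ Set.Icc (0:ℝ) 1) = ENNReal.ofReal (1 - (u - v)) := by
    have h1 : ENNReal.ofReal (1 - (u - v)) + ENNReal.ofReal (u - v) = 1 := by
      rw [← ENNReal.ofReal_add (by linarith) (by linarith)]
      norm_num
    have h2 := hsplit.trans h1.symm
    exact (ENNReal.add_left_inj (by simp)).1 h2
  rw [hfin, ENNReal.toReal_ofReal (by linarith), huvd]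
end

section
/- Let G(y) = 1 − √(1−y) on [0,1]. Then applying the r = 4 propagation operator to G yields G((1−√(1−y))/2) + 1 − G((1+√(1−y))/2) = 1 − √(1 − √y) for all y ∈ [0,1]. -/
theorem propagate_kumaraswamy (y : ℝ) (hy : y ∈ Set.Icc (0:ℝ) 1)
    (G : ℝ → ℝ) (hG : ∀ t, G t = 1 - Real.sqrt (1 - t)) :
    G ((1 - Real.sqrt (1 - y)) / 2) + 1 - G ((1 + Real.sqrt (1 - y)) / 2) =
      1 - Real.sqrt (1 - Real.sqrt y) := by
  obtain ⟨hy0, hy1⟩ := hy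
  set s := Real.sqrt (1 - y) with hs
  have hs0 : 0 ≤ s := Real.sqrt_nonneg _
  have hs1 : s ≤ 1 := by
    exact Real.sqrt_le_one.mpr (by linarith)
  have hssq : s ^ 2 = 1 - y := Real.sq_sqrt (by linarith)
  have h1 : (1:ℝ) - (1 - s) / 2 = (1 + s) / 2 := by ring
  have h2 : (1:ℝ) - (1 + s) / 2 = (1 - s) / 2 := by ring
  rw [hG, hG, h1, h2]
  have ha : (0:ℝ) ≤ (1 - s) / 2 := by linarith
  have hb : (0:ℝ) ≤ (1 + s) / 2 := by linarith
  have hprod : Real.sqrt ((1 + s) / 2) * Real.sqrt ((1 - s) / 2) = Real.sqrt y / 2 := by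
    rw [← Real.sqrt_mul hb]
    have : (1 + s) / 2 * ((1 - s) / 2) = y / 4 := by
      have : (1 - s ^ 2) = y := by linarith
      nlinarith [hssq]
    rw [this, show (y:ℝ)/4 = y * (1/2)^2 by ring, Real.sqrt_mul hy0,
      Real.sqrt_sq (by norm_num)]
    ring
  set A := Real.sqrt ((1 + s) / 2) - Real.sqrt ((1 - s) / 2) with hA
  have hAnn : 0 ≤ A := by
    rw [hA]
    have := Real.sqrt_le_sqrt (show (1 - s)/2 ≤ (1 + s)/2 by linarith)
    linarith
  have hAsq : A ^ 2 = 1 - Real.sqrt y := by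
    rw [hA]
    have e1 : Real.sqrt ((1 + s) / 2) ^ 2 = (1 + s) / 2 := Real.sq_sqrt hb
    have e2 : Real.sqrt ((1 - s) / 2) ^ 2 = (1 - s) / 2 := Real.sq_sqrt ha
    nlinarith [hprod]
  have : Real.sqrt (1 - Real.sqrt y) = A := by
    rw [← hAsq, Real.sqrt_sq hAnn]
  rw [this, hA]; ring
end

section
/- For 0 < r ≤ 4, if F is a cdf on [0,1] (continuous, nondecreasing, F(0)=0, F(1)=1), then the function y ↦ F(1/2 − q_r(y)) + 1 − F(1/2 + q_r(y)), where q_r(y) = √(1/4 − y/r) for y ≤ r/4 and q_r(y) = 0 otherwise, is again a cdf on [0,1]. -/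
theorem propagation_is_cdf (r : ℝ) (hr : 0 < r) (hr4 : r ≤ 4)
    (F : ℝ → ℝ) (hFc : ContinuousOn F (Set.Icc 0 1))
    (hFm : MonotoneOn F (Set.Icc 0 1)) (hF0 : F 0 = 0) (hF1 : F 1 = 1) :
    ContinuousOn (fun y : ℝ =>
        F (1/2 - (if y ≤ r/4 then Real.sqrt (1/4 - y/r) else 0)) + 1 -
        F (1/2 + (if y ≤ r/4 then Real.sqrt (1/4 - y/r) else 0))) (Set.Icc 0 1) ∧
    MonotoneOn (fun y : ℝ =>
        F (1/2 - (if y ≤ r/4 then Real.sqrt (1/4 - y/r) else 0)) + 1 -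
        F (1/2 + (if y ≤ r/4 then Real.sqrt (1/4 - y/r) else 0))) (Set.Icc 0 1) ∧
    (F (1/2 - (if (0:ℝ) ≤ r/4 then Real.sqrt (1/4 - 0/r) else 0)) + 1 -
        F (1/2 + (if (0:ℝ) ≤ r/4 then Real.sqrt (1/4 - 0/r) else 0)) = 0) ∧
    (F (1/2 - (if (1:ℝ) ≤ r/4 then Real.sqrt (1/4 - 1/r) else 0)) + 1 -
        F (1/2 + (if (1:ℝ) ≤ r/4 then Real.sqrt (1/4 - 1/r) else 0)) = 1) ∧
    Set.MapsTo (fun y : ℝ =>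
        F (1/2 - (if y ≤ r/4 then Real.sqrt (1/4 - y/r) else 0)) + 1 -
        F (1/2 + (if y ≤ r/4 then Real.sqrt (1/4 - y/r) else 0)))
      (Set.Icc 0 1) (Set.Icc 0 1) := by
  -- The `if` is redundant: sqrt of a nonpositive number is 0.
  have hif : ∀ y : ℝ, (if y ≤ r/4 then Real.sqrt (1/4 - y/r) else 0)
      = Real.sqrt (1/4 - y/r) := by
    intro y
    split_ifs with h
    · rfl
    · push_neg at h
      symm
      rw [Real.sqrt_eq_zero']
      have : 1/4 < y / r := (lt_div_iff₀ hr).mpr (by linarith)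
      linarith
  simp only [hif]
  set s : ℝ → ℝ := fun y => Real.sqrt (1/4 - y/r) with hs
  have hsqrt14 : Real.sqrt (1/4) = 1/2 := by
    rw [show (1/4:ℝ) = (1/2)^2 by norm_num, Real.sqrt_sq (by norm_num)]
  have hs_nonneg : ∀ y, 0 ≤ s y := fun y => Real.sqrt_nonneg _
  have hs_le : ∀ y, 0 ≤ y → s y ≤ 1/2 := by
    intro y hy
    have : s y ≤ Real.sqrt (1/4) := by
      apply Real.sqrt_le_sqrt
      have : 0 ≤ y / r := div_nonneg hy hr.le
      linarith
    linarith [hsqrt14 ▸ this]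
  have hs_anti : ∀ y₁ y₂, y₁ ≤ y₂ → s y₂ ≤ s y₁ := by
    intro y₁ y₂ h
    apply Real.sqrt_le_sqrt
    have : y₁ / r ≤ y₂ / r := by gcongr
    linarith
  have memA : ∀ y, 0 ≤ y → (1/2 - s y) ∈ Set.Icc (0:ℝ) 1 := by
    intro y hy
    constructor <;> [linarith [hs_le y hy]; linarith [hs_nonneg y]]
  have memB : ∀ y, 0 ≤ y → (1/2 + s y) ∈ Set.Icc (0:ℝ) 1 := by
    intro y hy
    constructor <;> [linarith [hs_nonneg y]; linarith [hs_le y hy]]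
  have hcont : ContinuousOn (fun y : ℝ =>
      F (1/2 - s y) + 1 - F (1/2 + s y)) (Set.Icc 0 1) := by
    have hscont : Continuous s := by
      apply Real.continuous_sqrt.comp
      continuity
    have h1 : ContinuousOn (fun y : ℝ => F (1/2 - s y)) (Set.Icc 0 1) := by
      apply hFc.comp ((continuous_const.sub hscont).continuousOn)
      intro y hy
      exact memA y hy.1
    have h2 : ContinuousOn (fun y : ℝ => F (1/2 + s y)) (Set.Icc 0 1) := by
      apply hFc.comp ((continuous_const.add hscont).continuousOn)
      intro y hy
      exact memB y hy.1
    exact (h1.add continuousOn_const).sub h2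
  have hmono : MonotoneOn (fun y : ℝ =>
      F (1/2 - s y) + 1 - F (1/2 + s y)) (Set.Icc 0 1) := by
    intro y₁ hy₁ y₂ hy₂ h
    have hA := hFm (memA y₁ hy₁.1) (memA y₂ hy₂.1) (by linarith [hs_anti y₁ y₂ h])
    have hB := hFm (memB y₂ hy₂.1) (memB y₁ hy₁.1) (by linarith [hs_anti y₁ y₂ h])
    simp only
    linarith
  have hmaps : Set.MapsTo (fun y : ℝ =>
      F (1/2 - s y) + 1 - F (1/2 + s y)) (Set.Icc 0 1) (Set.Icc 0 1) := by
    intro y hy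
    have hA := memA y hy.1
    have hB := memB y hy.1
    have h01 : (0:ℝ) ∈ Set.Icc (0:ℝ) 1 := by norm_num
    have h11 : (1:ℝ) ∈ Set.Icc (0:ℝ) 1 := by norm_num
    have h1 : F 0 ≤ F (1/2 - s y) := hFm h01 hA hA.1
    have h2 : F (1/2 + s y) ≤ F 1 := hFm hB h11 hB.2
    have h3 : F (1/2 - s y) ≤ F (1/2 + s y) :=
      hFm hA hB (by linarith [hs_nonneg y])
    constructor <;> simp only <;> [linarith [hF0 ▸ h1]; linarith [hF1 ▸ h2]]
  refine ⟨hcont, hmono, ?_, ?_, hmaps⟩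
  · have h0 : s 0 = 1/2 := by
      simp only [hs]
      rw [zero_div, sub_zero, hsqrt14]
    show F (1/2 - s 0) + 1 - F (1/2 + s 0) = 0
    rw [h0]
    norm_num [hF0, hF1]
  · have h1 : s 1 = 0 := by
      simp only [hs]
      rw [Real.sqrt_eq_zero']
      have : 1/4 ≤ 1/r := by
        rw [div_le_div_iff₀ (by norm_num) hr]
        linarith
      linarith
    show F (1/2 - s 1) + 1 - F (1/2 + s 1) = 1
    rw [h1]
    ring
end

section
/- The pushforward of the measure on [0,1] with density 1/(π·√(t(1−t))) under the map f_4(x) = 4x(1−x) equals the same measure; i.e., the arcsine (beta(1/2,1/2)) distribution is invariant under the logistic map with r = 4. -/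
open MeasureTheory Set

noncomputable section ArcsineAux

private def L (x : ℝ) : ℝ := 4 * x * (1 - x)

private lemma L_deriv (x : ℝ) : HasDerivAt L (4 - 8 * x) x := by
  have h := (((hasDerivAt_id x).const_mul (4:ℝ)).mul
    ((hasDerivAt_const x (1:ℝ)).sub (hasDerivAt_id x)))
  convert h using 1
  · rfl
  · rfl
  · funext y; simp [L]
  simp [id]
  ring

private lemma L_measurable : Measurable L := by
  unfold L; fun_prop

private lemma L_injOn_left : InjOn L (Ico (0:ℝ) (1/2)) := by
  have : StrictMonoOn L (Ico (0:ℝ) (1/2)) := by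
    intro a ha b hb hab
    have h1 : (0:ℝ) < b - a := by linarith
    have h2 : (0:ℝ) < 1 - a - b := by
      have := ha.1; have := hb.2; linarith
    have : (0:ℝ) < 4 * (b - a) * (1 - a - b) := by positivity
    unfold L; nlinarith
  exact this.injOn

private lemma L_injOn_right : InjOn L (Ioc (1/2:ℝ) 1) := by
  have : StrictAntiOn L (Ioc (1/2:ℝ) 1) := by
    intro a ha b hb hab
    have h1 : (0:ℝ) < b - a := by linarith
    have h2 : (0:ℝ) < a + b - 1 := by
      have := ha.1; have := hb.1; linarith
    have : (0:ℝ) < 4 * (b - a) * (a + b - 1) := by positivity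
    unfold L; nlinarith
  exact this.injOn

private lemma L_image_left : L '' (Ico (0:ℝ) (1/2)) = Ico (0:ℝ) 1 := by
  ext y
  constructor
  · rintro ⟨x, ⟨hx0, hx2⟩, rfl⟩
    constructor
    · unfold L; nlinarith
    · unfold L; nlinarith
  · rintro ⟨hy0, hy1⟩
    refine ⟨(1 - Real.sqrt (1 - y)) / 2, ⟨?_, ?_⟩, ?_⟩
    · have : Real.sqrt (1 - y) ≤ 1 := Real.sqrt_le_one.2 (by linarith)
      linarith
    · have : 0 < Real.sqrt (1 - y) := Real.sqrt_pos.2 (by linarith)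
      linarith
    · have hsq : Real.sqrt (1 - y) ^ 2 = 1 - y := Real.sq_sqrt (by linarith)
      unfold L; nlinarith

private lemma L_image_right : L '' (Ioc (1/2:ℝ) 1) = Ico (0:ℝ) 1 := by
  ext y
  constructor
  · rintro ⟨x, ⟨hx2, hx1⟩, rfl⟩
    constructor
    · unfold L; nlinarith
    · unfold L; nlinarith
  · rintro ⟨hy0, hy1⟩
    refine ⟨(1 + Real.sqrt (1 - y)) / 2, ⟨?_, ?_⟩, ?_⟩
    · have : 0 < Real.sqrt (1 - y) := Real.sqrt_pos.2 (by linarith)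
      linarith
    · have : Real.sqrt (1 - y) ≤ 1 := Real.sqrt_le_one.2 (by linarith)
      linarith
    · have hsq : Real.sqrt (1 - y) ^ 2 = 1 - y := Real.sq_sqrt (by linarith)
      unfold L; nlinarith

/-- Pull a density through a map. -/
private lemma map_withDensity_comp {f : ℝ → ℝ} (hf : Measurable f) {g : ℝ → ENNReal}
    (hg : Measurable g) (μ : Measure ℝ) :
    Measure.map f (μ.withDensity (g ∘ f)) = (Measure.map f μ).withDensity g := by
  ext s hs
  rw [Measure.map_apply hf hs, withDensity_apply _ (hf hs), withDensity_apply _ hs,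
    setLIntegral_map hs hg hf]
  rfl

/-- 1D change of variables for measures. -/
private lemma map_withDensity_deriv {s : Set ℝ} (hs : MeasurableSet s) {f f' : ℝ → ℝ}
    (hf' : ∀ x ∈ s, HasDerivWithinAt f (f' x) s x) (hf : InjOn f s) (h'f : Measurable f) :
    Measure.map f ((volume.restrict s).withDensity fun x => ENNReal.ofReal |f' x|) =
      volume.restrict (f '' s) := by
  simpa [ContinuousLinearMap.det_toSpanSingleton] using
    MeasureTheory.map_withDensity_abs_det_fderiv_eq_addHaar volume hs.nullMeasurableSet
      (fun x hx => (hf' x hx).hasFDerivWithinAt) hf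

private lemma density_key {x : ℝ} (hx0 : 0 < x) (hx1 : x < 1) (hx2 : x ≠ 1/2) :
    ENNReal.ofReal |4 - 8*x| *
      ENNReal.ofReal (1 / (2 * Real.pi * Real.sqrt (L x * (1 - L x)))) =
    ENNReal.ofReal (1 / (Real.pi * Real.sqrt (x * (1 - x)))) := by
  have hu : 0 < Real.sqrt (x*(1-x)) := Real.sqrt_pos.2 (by nlinarith)
  have ha : 0 < |1 - 2*x| := abs_pos.2 (by intro h; apply hx2; linarith)
  have hsq : Real.sqrt (L x * (1 - L x)) = 2 * |1-2*x| * Real.sqrt (x*(1-x)) := by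
    rw [show L x * (1 - L x) = (2 * |1-2*x| * Real.sqrt (x*(1-x)))^2 by
      rw [mul_pow, mul_pow, sq_abs, Real.sq_sqrt (by nlinarith)]; unfold L; ring]
    exact Real.sqrt_sq (by positivity)
  have habs : |4 - 8*x| = 4 * |1 - 2*x| := by
    rw [show (4:ℝ) - 8*x = 4*(1-2*x) by ring, abs_mul, abs_of_nonneg (by norm_num : (0:ℝ) ≤ 4)]
  rw [hsq, habs, ← ENNReal.ofReal_mul (by positivity)]
  congr 1
  have hπ : Real.pi ≠ 0 := Real.pi_ne_zero
  set a := |1 - 2*x| with hA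
  set u := Real.sqrt (x*(1-x)) with hU
  field_simp
  ring

private lemma density_sum (y : ℝ) :
    ENNReal.ofReal (1 / (2*Real.pi*Real.sqrt (y*(1-y)))) +
      ENNReal.ofReal (1 / (2*Real.pi*Real.sqrt (y*(1-y)))) =
    ENNReal.ofReal (1 / (Real.pi*Real.sqrt (y*(1-y)))) := by
  rcases eq_or_ne (Real.sqrt (y*(1-y))) 0 with h | h
  · simp [h]
  · rw [← ENNReal.ofReal_add (by positivity) (by positivity)]
    congr 1
    have hπ : Real.pi ≠ 0 := Real.pi_ne_zero
    field_simp
    ring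

private lemma half_piece {s : Set ℝ} (hs : MeasurableSet s) (hinj : InjOn L s)
    (him : L '' s = Ico (0:ℝ) 1)
    (hpt : ∀ x ∈ s, ENNReal.ofReal |4 - 8*x| *
        ENNReal.ofReal (1 / (2 * Real.pi * Real.sqrt (L x * (1 - L x)))) =
      ENNReal.ofReal (1 / (Real.pi * Real.sqrt (x * (1 - x))))) :
    Measure.map L ((volume.restrict s).withDensity
        (fun t => ENNReal.ofReal (1 / (Real.pi * Real.sqrt (t * (1 - t)))))) =
      (volume.restrict (Ico (0:ℝ) 1)).withDensity
        (fun y => ENNReal.ofReal (1 / (2 * Real.pi * Real.sqrt (y * (1 - y))))) := by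
  set G : ℝ → ENNReal := fun y => ENNReal.ofReal (1 / (2 * Real.pi * Real.sqrt (y * (1 - y))))
    with hGdef
  have hGm : Measurable G := by
    apply Measurable.ennreal_ofReal
    fun_prop
  have hD : Measurable (fun x : ℝ => ENNReal.ofReal |4 - 8*x|) := by
    apply Measurable.ennreal_ofReal
    fun_prop
  have step1 : (volume.restrict s).withDensity
      (fun t => ENNReal.ofReal (1 / (Real.pi * Real.sqrt (t * (1 - t))))) =
      ((volume.restrict s).withDensity (fun x => ENNReal.ofReal |4 - 8*x|)).withDensity
        (G ∘ L) := by
    rw [← withDensity_mul _ hD (hGm.comp L_measurable)]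
    apply withDensity_congr_ae
    filter_upwards [ae_restrict_mem hs] with x hx
    simpa [hGdef] using (hpt x hx).symm
  rw [step1, map_withDensity_comp L_measurable hGm,
    map_withDensity_deriv hs (fun x _ => (L_deriv x).hasDerivWithinAt) hinj L_measurable, him]

end ArcsineAux

theorem arcsine_invariant_logistic4 :
    Measure.map (fun x : ℝ => 4 * x * (1 - x))
        ((volume.restrict (Set.Icc (0:ℝ) 1)).withDensity
          (fun t => ENNReal.ofReal (1 / (Real.pi * Real.sqrt (t * (1 - t)))))) =
      (volume.restrict (Set.Icc (0:ℝ) 1)).withDensity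
        (fun t => ENNReal.ofReal (1 / (Real.pi * Real.sqrt (t * (1 - t))))) := by
  have hL : (fun x : ℝ => 4 * x * (1 - x)) = L := rfl
  rw [hL]
  have hset : Icc (0:ℝ) 1 =ᵐ[volume] ((Ico (0:ℝ) (1/2) ∪ Ioc (1/2) 1 : Set ℝ)) := by
    rw [← Set.Ico_union_Icc_eq_Icc (by norm_num : (0:ℝ) ≤ 1/2) (by norm_num : (1/2:ℝ) ≤ 1)]
    exact MeasureTheory.ae_eq_set_union (Filter.EventuallyEq.refl _ _) Ioc_ae_eq_Icc.symm
  have hdisj : Disjoint (Ico (0:ℝ) (1/2)) (Ioc (1/2) 1) := by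
    apply Set.disjoint_left.2
    rintro x ⟨_, h2⟩ ⟨h3, _⟩
    linarith
  have hptl : ∀ x ∈ Ico (0:ℝ) (1/2), ENNReal.ofReal |4 - 8*x| *
      ENNReal.ofReal (1 / (2 * Real.pi * Real.sqrt (L x * (1 - L x)))) =
      ENNReal.ofReal (1 / (Real.pi * Real.sqrt (x * (1 - x)))) := by
    rintro x ⟨hx0, hx2⟩
    rcases eq_or_lt_of_le hx0 with h | h
    · norm_num [L, ← h]
    · exact density_key h (by linarith) (ne_of_lt hx2)
  have hptr : ∀ x ∈ Ioc (1/2:ℝ) 1, ENNReal.ofReal |4 - 8*x| *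
      ENNReal.ofReal (1 / (2 * Real.pi * Real.sqrt (L x * (1 - L x)))) =
      ENNReal.ofReal (1 / (Real.pi * Real.sqrt (x * (1 - x)))) := by
    rintro x ⟨hx2, hx1⟩
    rcases lt_or_eq_of_le hx1 with h | h
    · exact density_key (by linarith) h (ne_of_gt hx2)
    · norm_num [L, h]
  calc Measure.map L ((volume.restrict (Icc (0:ℝ) 1)).withDensity
        (fun t => ENNReal.ofReal (1 / (Real.pi * Real.sqrt (t * (1 - t))))))
      = Measure.map L ((volume.restrict (Ico (0:ℝ) (1/2))).withDensity
          (fun t => ENNReal.ofReal (1 / (Real.pi * Real.sqrt (t * (1 - t))))))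
        + Measure.map L ((volume.restrict (Ioc (1/2:ℝ) 1)).withDensity
          (fun t => ENNReal.ofReal (1 / (Real.pi * Real.sqrt (t * (1 - t)))))) := by
        rw [Measure.restrict_congr_set hset, Measure.restrict_union hdisj measurableSet_Ioc,
          withDensity_add_measure, Measure.map_add _ _ L_measurable]
    _ = (volume.restrict (Ico (0:ℝ) 1)).withDensity
          (fun y => ENNReal.ofReal (1 / (2 * Real.pi * Real.sqrt (y * (1 - y)))))
        + (volume.restrict (Ico (0:ℝ) 1)).withDensity
          (fun y => ENNReal.ofReal (1 / (2 * Real.pi * Real.sqrt (y * (1 - y))))) := by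
        rw [half_piece measurableSet_Ico L_injOn_left L_image_left hptl,
          half_piece measurableSet_Ioc L_injOn_right L_image_right hptr]
    _ = (volume.restrict (Icc (0:ℝ) 1)).withDensity
        (fun t => ENNReal.ofReal (1 / (Real.pi * Real.sqrt (t * (1 - t))))) := by
        rw [← withDensity_add_left (by apply Measurable.ennreal_ofReal; fun_prop),
          Measure.restrict_congr_set Ico_ae_eq_Icc]
        congr 1
        funext y
        exact density_sum y
end
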